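/- Let Γ be a countable group, let E be an equivalence relation on a standard Borel space X, and let k ≥ 1. Define equivalence relations F_i by F_0 = E^{Γ^k} (the product relation on X^{Γ^k}, where Γ^k is the direct product of k copies of Γ) and F_{i+1} = (F_i)^{[Γ]}. Then E^{[Γ^k]} is Borel reducible to F_k. -/

import Mathlib

universe u v

/-- The Γ-jump of an equivalence relation `E` on `X`. -/
def GammaJump (Γ : Type*) [Group Γ] {X : Type*} (E : X → X → Prop) :
    (Γ → X) → (Γ → X) → Prop :=
  fun x y => ∃ γ : Γ, ∀ α : Γ, E (x (γ⁻¹ * α)) (y α)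

/-- Borel reducibility of binary relations on measurable spaces. -/
def BorelReducible {X Y : Type*} [MeasurableSpace X] [MeasurableSpace Y]
    (E : X → X → Prop) (F : Y → Y → Prop) : Prop :=
  ∃ f : X → Y, Measurable f ∧ ∀ x x', E x x' ↔ F (f x) (f x')

/-- Domain of the `i`-th iterate: `D 0 = X^{Γ^k}`, `D (i+1) = Γ → D i`. -/
def JumpIterDom (Γ : Type u) (X : Type v) (k : ℕ) : ℕ → Type (max u v)
  | 0 => (Fin k → Γ) → X
  | i + 1 => Γ → JumpIterDom Γ X k i

instance instMeasurableSpaceJumpIterDom (Γ : Type u) (X : Type v) [MeasurableSpace X]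
    (k : ℕ) : (i : ℕ) → MeasurableSpace (JumpIterDom Γ X k i)
  | 0 => inferInstanceAs (MeasurableSpace ((Fin k → Γ) → X))
  | i + 1 =>
      letI := instMeasurableSpaceJumpIterDom Γ X k i
      inferInstanceAs (MeasurableSpace (Γ → JumpIterDom Γ X k i))

/-- The relations `F_i`: `F_0 = E^{Γ^k}` (the product relation on `X^{Γ^k}`) and
`F_{i+1} = (F_i)^{[Γ]}`. -/
def JumpIterRel (Γ : Type u) [Group Γ] {X : Type v} (E : X → X → Prop) (k : ℕ) :
    (i : ℕ) → JumpIterDom Γ X k i → JumpIterDom Γ X k i → Prop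
  | 0 => fun x y => ∀ v : Fin k → Γ, E (x v) (y v)
  | i + 1 => GammaJump Γ (JumpIterRel Γ E k i)

/-- The reduction map, defined by recursion on `i`. -/
def jumpRed (Γ : Type u) [Group Γ] (X : Type v) (k : ℕ) :
    (i : ℕ) → ((Fin k → Γ) → X) → JumpIterDom Γ X k i
  | 0, x => x
  | i + 1, x => fun α => jumpRed Γ X k i (fun v => x (fun j => if j.1 = i then α * v j else v j))

lemma jumpRed_measurable (Γ : Type u) [Group Γ] (X : Type v) [MeasurableSpace X] (k : ℕ) :
    ∀ i : ℕ, Measurable (jumpRed Γ X k i)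
  | 0 => measurable_id
  | i + 1 => by
      rw [show (instMeasurableSpaceJumpIterDom Γ X k (i+1)) =
        (MeasurableSpace.pi : MeasurableSpace (Γ → JumpIterDom Γ X k i)) from rfl]
      refine (measurable_pi_iff (X := fun _ : Γ => JumpIterDom Γ X k i)).mpr ?_
      intro α
      have h1 : Measurable (fun (x : (Fin k → Γ) → X) (v : Fin k → Γ) =>
          x (fun j => if j.1 = i then α * v j else v j)) := by
        rw [measurable_pi_iff]; intro v
        exact measurable_pi_apply _
      exact (jumpRed_measurable Γ X k i).comp h1

lemma jumpRed_key {Γ : Type u} [Group Γ] {X : Type v} (E : X → X → Prop) (k : ℕ) :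
    ∀ i : ℕ, i ≤ k → ∀ x y : (Fin k → Γ) → X,
      (JumpIterRel Γ E k i (jumpRed Γ X k i x) (jumpRed Γ X k i y) ↔
        ∃ δ : Fin k → Γ, ∀ v : Fin k → Γ,
          E (x (fun j => if j.1 < i then δ j * v j else v j)) (y v))
  | 0, _, x, y => by
      simp only [JumpIterRel, jumpRed]
      constructor
      · intro h; exact ⟨1, by simpa using h⟩
      · rintro ⟨δ, h⟩; simpa using h
  | i + 1, hik, x, y => by
      have hlt : i < k := hik
      constructor
      · rintro ⟨γ, hγ⟩
        obtain ⟨δ, hδ⟩ := (jumpRed_key E k i (le_of_lt hlt) _ _).mp (hγ 1)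
        refine ⟨fun j => if j.1 = i then γ⁻¹ else δ j, fun v => ?_⟩
        have h' := hδ v
        beta_reduce at h' ⊢
        have e1 : (fun j : Fin k => if j.1 = i then (γ⁻¹ * 1) * (if j.1 < i then δ j * v j else v j)
            else (if j.1 < i then δ j * v j else v j)) =
            (fun j : Fin k => if j.1 < i + 1 then (if j.1 = i then γ⁻¹ else δ j) * v j else v j) := by
          funext j
          rcases lt_trichotomy j.1 i with h | h | h
          · simp [h.ne, h, h.trans (Nat.lt_succ_self i)]
          · simp [h, mul_one]
          · simp [h.ne', not_lt_of_gt h, Nat.lt_succ_iff, not_le_of_gt h]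
        have e2 : (fun j : Fin k => if j.1 = i then (1 : Γ) * v j else v j) = v := by
          funext j; split <;> simp
        rw [e1, e2] at h'
        exact h'
      · rintro ⟨δ, hδ⟩
        show ∃ γ : Γ, ∀ α : Γ, JumpIterRel Γ E k i
          (jumpRed Γ X k (i + 1) x (γ⁻¹ * α)) (jumpRed Γ X k (i + 1) y α)
        refine ⟨(δ ⟨i, hlt⟩)⁻¹, fun α => ?_⟩
        show JumpIterRel Γ E k i
          (jumpRed Γ X k i fun v => x fun j => if j.1 = i then (((δ ⟨i, hlt⟩)⁻¹)⁻¹ * α) * v j else v j)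
          (jumpRed Γ X k i fun v => y fun j => if j.1 = i then α * v j else v j)
        refine (jumpRed_key E k i (le_of_lt hlt) _ _).mpr ⟨δ, fun v => ?_⟩
        have h' := hδ (fun j => if j.1 = i then α * v j else v j)
        beta_reduce at h' ⊢
        have e1 : (fun j : Fin k => if j.1 < i + 1 then δ j *
              (if j.1 = i then α * v j else v j) else (if j.1 = i then α * v j else v j)) =
            (fun j : Fin k => if j.1 = i then (((δ ⟨i, hlt⟩)⁻¹)⁻¹ * α) * (if j.1 < i then δ j * v j else v j)
              else (if j.1 < i then δ j * v j else v j)) := by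
          funext j
          rcases lt_trichotomy j.1 i with h | h | h
          · simp [h.ne, h, h.trans (Nat.lt_succ_self i)]
          · have hj : j = ⟨i, hlt⟩ := Fin.ext h
            subst hj
            simp [mul_assoc]
          · simp [h.ne', not_lt_of_gt h, Nat.lt_succ_iff, not_le_of_gt h]
        rw [e1] at h'
        exact h'


/-- For a countable group `Γ`, an equivalence relation `E` on a standard
Borel space `X` and `k ≥ 1`, `E^{[Γ^k]}` is Borel reducible to `F_k`, where
`F_0 = E^{Γ^k}` and `F_{i+1} = (F_i)^{[Γ]}`. -/
theorem gammaJump_pow_borelReducible_iter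
    {X : Type v} [MeasurableSpace X] [StandardBorelSpace X]
    (E : X → X → Prop) (hE : Equivalence E)
    (Γ : Type u) [Group Γ] [Countable Γ] (k : ℕ) (hk : 1 ≤ k) :
    BorelReducible (GammaJump (Fin k → Γ) E) (JumpIterRel Γ E k k) := by
  refine ⟨jumpRed Γ X k k, jumpRed_measurable Γ X k k, fun x y => ?_⟩
  rw [jumpRed_key E k k le_rfl x y]
  constructor
  · rintro ⟨γ, hγ⟩
    refine ⟨γ⁻¹, fun v => ?_⟩
    have := hγ v
    have e : (fun j : Fin k => if j.1 < k then γ⁻¹ j * v j else v j) = γ⁻¹ * v := by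
      funext j; simp [j.2, Pi.mul_apply]
    rw [e]; exact this
  · rintro ⟨δ, hδ⟩
    refine ⟨δ⁻¹, fun α => ?_⟩
    have := hδ α
    have e : (fun j : Fin k => if j.1 < k then δ j * α j else α j) = (δ⁻¹)⁻¹ * α := by
      funext j; simp [j.2, Pi.mul_apply]
    rw [e] at this; exact this
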